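/- arXiv:2603.27812 — 2 statements merged into one kernel-verified Lean document; each statement's English description precedes it below -/
import Mathlib

section
/- Any extreme point of the fractional matching polytope {x ∈ ℝ^E : x ≥ 0, Σ_{e ∈ δ(v)} x_e ≤ 1 for all v ∈ V} of a finite graph G is half-integral, i.e., every coordinate of an extreme point belongs to {0, 1/2, 1}. -/
open Finset

/-- The fractional matching polytope of a finite graph `G`, as a set of vectors
indexed by `Sym2 V` supported on the edge set: nonnegativity and degree constraints. -/
def fracMatchingPolytope {V : Type*} [Fintype V] [DecidableEq V]
    (G : SimpleGraph V) [DecidableRel G.Adj] : Set (Sym2 V → ℝ) :=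
  {x | (∀ e, 0 ≤ x e) ∧ (∀ e, e ∉ G.edgeFinset → x e = 0) ∧
    ∀ v : V, ∑ e ∈ G.edgeFinset.filter (fun e => v ∈ e), x e ≤ 1}

lemma sym2_card_mem {V : Type*} [Fintype V] [DecidableEq V] (e : Sym2 V)
    (he : ¬ e.IsDiag) : (Finset.univ.filter (fun v => v ∈ e)).card = 2 := by
  induction e with
  | _ u w =>
    rw [Sym2.mk_isDiag_iff] at he
    have h : Finset.univ.filter (fun v => v ∈ s(u, w)) = {u, w} := by
      ext v; simp [Sym2.mem_iff]
    rw [h, Finset.card_pair he]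

lemma handshake {V : Type*} [Fintype V] [DecidableEq V] (F : Finset (Sym2 V))
    (hF : ∀ e ∈ F, ¬ e.IsDiag) :
    ∑ v : V, (F.filter (fun e => v ∈ e)).card = 2 * F.card := by
  calc ∑ v : V, (F.filter (fun e => v ∈ e)).card
      = ∑ v : V, ∑ e ∈ F, if v ∈ e then 1 else 0 := by
        refine Finset.sum_congr rfl fun v _ => ?_
        rw [Finset.card_filter]
    _ = ∑ e ∈ F, ∑ v : V, if v ∈ e then 1 else 0 := Finset.sum_comm
    _ = ∑ e ∈ F, 2 := by
        refine Finset.sum_congr rfl fun e he => ?_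
        rw [← Finset.card_filter]
        exact sym2_card_mem e (hF e he)
    _ = 2 * F.card := by rw [Finset.sum_const, smul_eq_mul, mul_comm]

lemma aux_card_le {V : Type*} [Fintype V] [DecidableEq V]
    (F : Finset (Sym2 V)) (T : Finset V)
    (H4 : ∀ d : Sym2 V → ℝ, (∀ e, e ∉ F → d e = 0) →
      (∀ v ∈ T, ∑ e ∈ F.filter (fun e => v ∈ e), d e = 0) → d = 0) :
    F.card ≤ T.card := by
  classical
  set b : ↥F → (↥T → ℝ) := fun e v => if (v : V) ∈ (e : Sym2 V) then 1 else 0 with hb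
  have hli : LinearIndependent ℝ b := by
    rw [Fintype.linearIndependent_iff]
    intro g hg
    set d : Sym2 V → ℝ := fun e => if h : e ∈ F then g ⟨e, h⟩ else 0 with hd
    have hzero : d = 0 := by
      apply H4
      · intro e he; simp [hd, he]
      · intro v hv
        have h1 : ∑ e ∈ F.filter (fun e => v ∈ e), d e
            = ∑ e ∈ F, if v ∈ e then d e else 0 := Finset.sum_filter _ _
        have h3 : ∑ e ∈ F.attach, (if v ∈ (e : Sym2 V) then d e else 0)
            = ∑ e ∈ F, if v ∈ e then d e else 0 :=
          Finset.sum_attach F (fun e => if v ∈ e then d e else 0)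
        have h4 : ∀ e : ↥F, (if v ∈ (e : Sym2 V) then d (e : Sym2 V) else 0)
            = g e * b e ⟨v, hv⟩ := by
          intro e
          simp only [hb, hd, dif_pos e.2]
          by_cases hve : v ∈ (e : Sym2 V) <;> simp [hve]
        have h5 := congrFun hg ⟨v, hv⟩
        rw [Finset.sum_apply] at h5
        rw [h1, ← h3]
        rw [Finset.sum_congr rfl (fun e _ => h4 e)]
        simpa [smul_eq_mul] using h5
    intro i
    have := congrFun hzero (i : Sym2 V)
    simpa [hd, dif_pos i.2] using this
  have hcard := hli.fintype_card_le_finrank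
  simpa [Module.finrank_pi, Fintype.card_coe] using hcard

theorem stmt4 {V : Type*} [Fintype V] [DecidableEq V]
    (G : SimpleGraph V) [DecidableRel G.Adj]
    (x : Sym2 V → ℝ) (hx : x ∈ Set.extremePoints ℝ (fracMatchingPolytope G)) :
    ∀ e : Sym2 V, x e ∈ ({0, 1/2, 1} : Set ℝ) := by
  classical
  obtain ⟨hxP, hext⟩ := hx
  obtain ⟨h0, hE0, hV1⟩ := hxP
  set F : Finset (Sym2 V) := G.edgeFinset.filter (fun e => 0 < x e ∧ x e < 1) with hFdef
  set T : Finset V := Finset.univ.filter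
      (fun v => ∑ e ∈ F.filter (fun e => v ∈ e), x e = 1) with hTdef
  have hFE : F ⊆ G.edgeFinset := Finset.filter_subset _ _
  -- If a vertex with sum 1 has a fractional edge, its fractional sum is 1 (so it is in T)
  have hFsum : ∀ v : V, (∃ f ∈ F, v ∈ f) →
      (∑ e ∈ G.edgeFinset.filter (fun e => v ∈ e), x e = 1) → v ∈ T := by
    rintro v ⟨f, hfF, hvf⟩ hv1
    rw [hTdef, Finset.mem_filter]
    refine ⟨Finset.mem_univ v, ?_⟩
    rw [← hv1]
    apply Finset.sum_subset (Finset.filter_subset_filter _ hFE)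
    intro e heE heF
    have heEv := Finset.mem_filter.mp heE
    have heF' : e ∉ F := fun h => heF (Finset.mem_filter.mpr ⟨h, heEv.2⟩)
    have hxe : ¬ (0 < x e ∧ x e < 1) := fun h =>
      heF' (Finset.mem_filter.mpr ⟨heEv.1, h⟩)
    rcases lt_or_ge (x e) 1 with hlt | hge
    · rcases lt_or_ge 0 (x e) with hgt | hle
      · exact absurd ⟨hgt, hlt⟩ hxe
      · linarith [h0 e]
    · exfalso
      have hfE : f ∈ G.edgeFinset.filter (fun e => v ∈ e) :=
        Finset.mem_filter.mpr ⟨hFE hfF, hvf⟩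
      have hef : e ≠ f := fun h => heF' (h ▸ hfF)
      have hpair : ({e, f} : Finset (Sym2 V)) ⊆ G.edgeFinset.filter (fun e => v ∈ e) := by
        intro g hg
        rcases Finset.mem_insert.mp hg with rfl | hg
        · exact heE
        · rw [Finset.mem_singleton.mp hg]; exact hfE
      have hle : x e + x f ≤ ∑ e ∈ G.edgeFinset.filter (fun e => v ∈ e), x e := by
        rw [← Finset.sum_pair hef]
        exact Finset.sum_le_sum_of_subset_of_nonneg hpair (fun i _ _ => h0 i)
      have hxf : 0 < x f := ((Finset.mem_filter.mp hfF).2).1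
      linarith
  -- Trivial kernel property
  have HK : ∀ d : Sym2 V → ℝ, (∀ e, e ∉ F → d e = 0) →
      (∀ v ∈ T, ∑ e ∈ F.filter (fun e => v ∈ e), d e = 0) → d = 0 := by
    intro d hd1 hd2
    by_contra hd0
    obtain ⟨e1, he1⟩ : ∃ e, d e ≠ 0 := by
      by_contra h; push_neg at h; exact hd0 (funext h)
    have he1F : e1 ∈ F := by by_contra h; exact he1 (hd1 e1 h)
    -- tight vertices have zero d-sum
    have hC : ∀ v : V, (∑ e ∈ G.edgeFinset.filter (fun e => v ∈ e), x e = 1) →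
        (∑ e ∈ G.edgeFinset.filter (fun e => v ∈ e), d e = 0) := by
      intro v hv1
      by_cases hvW : ∃ f ∈ F, v ∈ f
      · have hvT : v ∈ T := hFsum v hvW hv1
        have hh : ∑ e ∈ F.filter (fun e => v ∈ e), d e
            = ∑ e ∈ G.edgeFinset.filter (fun e => v ∈ e), d e := by
          apply Finset.sum_subset (Finset.filter_subset_filter _ hFE)
          intro e heE heF
          exact hd1 e (fun hF' => heF (Finset.mem_filter.mpr ⟨hF', (Finset.mem_filter.mp heE).2⟩))
        rw [← hh]
        exact hd2 v hvT
      · push_neg at hvW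
        apply Finset.sum_eq_zero
        intro e he
        exact hd1 e (fun hF' => hvW e hF' (Finset.mem_filter.mp he).2)
    -- choose epsilon
    set S1 : Finset ℝ := (F.filter (fun e => d e ≠ 0)).image (fun e => x e / |d e|) with hS1
    set S2 : Finset ℝ := (Finset.univ.filter
        (fun v => (∑ e ∈ G.edgeFinset.filter (fun e => v ∈ e), d e) ≠ 0)).image
        (fun v => (1 - ∑ e ∈ G.edgeFinset.filter (fun e => v ∈ e), x e)
          / |∑ e ∈ G.edgeFinset.filter (fun e => v ∈ e), d e|) with hS2
    set S : Finset ℝ := insert 1 (S1 ∪ S2) with hS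
    have hSne : S.Nonempty := ⟨1, Finset.mem_insert_self _ _⟩
    set ε : ℝ := S.min' hSne with hεdef
    have hεle : ∀ a ∈ S, ε ≤ a := fun a ha => Finset.min'_le S a ha
    have hpos : ∀ a ∈ S, 0 < a := by
      intro a ha
      rcases Finset.mem_insert.mp ha with rfl | ha
      · norm_num
      rcases Finset.mem_union.mp ha with ha | ha
      · obtain ⟨e, he, rfl⟩ := Finset.mem_image.mp ha
        obtain ⟨heF, hde⟩ := Finset.mem_filter.mp he
        have hxe : 0 < x e := ((Finset.mem_filter.mp heF).2).1
        exact div_pos hxe (abs_pos.mpr hde)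
      · obtain ⟨v, hv, rfl⟩ := Finset.mem_image.mp ha
        have htv : (∑ e ∈ G.edgeFinset.filter (fun e => v ∈ e), d e) ≠ 0 :=
          (Finset.mem_filter.mp hv).2
        have hs1 : (∑ e ∈ G.edgeFinset.filter (fun e => v ∈ e), x e) ≠ 1 :=
          fun h => htv (hC v h)
        have hs2 := hV1 v
        exact div_pos (by cases lt_or_eq_of_le hs2 with
          | inl h => linarith
          | inr h => exact absurd h hs1) (abs_pos.mpr htv)
    have hεpos : 0 < ε := hpos ε (S.min'_mem hSne)
    have hb1 : ∀ e, d e ≠ 0 → ε * |d e| ≤ x e := by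
      intro e hde
      have heF : e ∈ F := by by_contra h; exact hde (hd1 e h)
      have hmem : x e / |d e| ∈ S := Finset.mem_insert_of_mem (Finset.mem_union_left _
        (Finset.mem_image_of_mem _ (Finset.mem_filter.mpr ⟨heF, hde⟩)))
      have h := hεle _ hmem
      rwa [le_div_iff₀ (abs_pos.mpr hde)] at h
    have hb2 : ∀ v, (∑ e ∈ G.edgeFinset.filter (fun e => v ∈ e), d e) ≠ 0 →
        ε * |∑ e ∈ G.edgeFinset.filter (fun e => v ∈ e), d e|
          ≤ 1 - ∑ e ∈ G.edgeFinset.filter (fun e => v ∈ e), x e := by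
      intro v htv
      have hmem : (1 - ∑ e ∈ G.edgeFinset.filter (fun e => v ∈ e), x e)
          / |∑ e ∈ G.edgeFinset.filter (fun e => v ∈ e), d e| ∈ S :=
        Finset.mem_insert_of_mem (Finset.mem_union_right _
          (Finset.mem_image_of_mem _ (Finset.mem_filter.mpr ⟨Finset.mem_univ v, htv⟩)))
      have h := hεle _ hmem
      rwa [le_div_iff₀ (abs_pos.mpr htv)] at h
    -- membership of perturbed points
    have hmemP : ∀ σ : ℝ, |σ| = 1 →
        (fun e => x e + σ * (ε * d e)) ∈ fracMatchingPolytope G := by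
      intro σ hσ
      refine ⟨?_, ?_, ?_⟩
      · intro e
        by_cases hde : d e = 0
        · simpa [hde] using h0 e
        · have h1 := hb1 e hde
          have h2 : |σ * (ε * d e)| = ε * |d e| := by
            rw [abs_mul, hσ, one_mul, abs_mul, abs_of_pos hεpos]
          have h3 := neg_abs_le (σ * (ε * d e))
          simp only []
          linarith
      · intro e he
        have heF : e ∉ F := fun h => he (hFE h)
        simp [hd1 e heF, hE0 e he]
      · intro v
        have hsplit : ∑ e ∈ G.edgeFinset.filter (fun e => v ∈ e), (x e + σ * (ε * d e))
            = (∑ e ∈ G.edgeFinset.filter (fun e => v ∈ e), x e)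
              + σ * (ε * ∑ e ∈ G.edgeFinset.filter (fun e => v ∈ e), d e) := by
          rw [Finset.sum_add_distrib, ← Finset.mul_sum, ← Finset.mul_sum]
        rw [hsplit]
        by_cases htv : (∑ e ∈ G.edgeFinset.filter (fun e => v ∈ e), d e) = 0
        · simpa [htv] using hV1 v
        · have h2 := hb2 v htv
          have h3 : |σ * (ε * ∑ e ∈ G.edgeFinset.filter (fun e => v ∈ e), d e)|
              = ε * |∑ e ∈ G.edgeFinset.filter (fun e => v ∈ e), d e| := by
            rw [abs_mul, hσ, one_mul, abs_mul, abs_of_pos hεpos]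
          have h4 := le_abs_self (σ * (ε * ∑ e ∈ G.edgeFinset.filter (fun e => v ∈ e), d e))
          linarith
    have hyP := hmemP 1 (by norm_num)
    have hzP := hmemP (-1) (by norm_num)
    have hseg : x ∈ openSegment ℝ (fun e => x e + 1 * (ε * d e))
        (fun e => x e + (-1) * (ε * d e)) := by
      refine ⟨1/2, 1/2, by norm_num, by norm_num, by norm_num, ?_⟩
      funext e
      simp only [Pi.add_apply, Pi.smul_apply, smul_eq_mul]
      ring
    have hy1 := hext hyP hzP hseg
    have hfe := congrFun hy1 e1
    simp only [one_mul] at hfe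
    have : ε * d e1 = 0 := by linarith
    exact he1 (by
      rcases mul_eq_zero.mp this with h | h
      · exact absurd h (ne_of_gt hεpos)
      · exact h)
  -- main part
  intro e
  simp only [Set.mem_insert_iff, Set.mem_singleton_iff]
  by_cases heE : e ∈ G.edgeFinset
  swap
  · exact Or.inl (hE0 e heE)
  have hxle : x e ≤ 1 := by
    obtain ⟨v, hv⟩ : ∃ v, v ∈ e := ⟨e.out.1, Sym2.out_fst_mem e⟩
    have hmem : e ∈ G.edgeFinset.filter (fun f => v ∈ f) := Finset.mem_filter.mpr ⟨heE, hv⟩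
    calc x e ≤ ∑ f ∈ G.edgeFinset.filter (fun f => v ∈ f), x f :=
          Finset.single_le_sum (fun i _ => h0 i) hmem
      _ ≤ 1 := hV1 v
  rcases eq_or_lt_of_le (h0 e) with h₀ | h₀
  · exact Or.inl h₀.symm
  rcases eq_or_lt_of_le hxle with h₁ | h₁
  · exact Or.inr (Or.inr h₁)
  have heF : e ∈ F := Finset.mem_filter.mpr ⟨heE, h₀, h₁⟩
  refine Or.inr (Or.inl ?_)
  by_contra hne
  -- counting
  have hND : ∀ f ∈ F, ¬ f.IsDiag := fun f hf =>
    G.not_isDiag_of_mem_edgeSet (SimpleGraph.mem_edgeFinset.mp (hFE hf))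
  have hhand := handshake F hND
  have hcard := aux_card_le F T HK
  have hdeg2 : ∀ v ∈ T, 2 ≤ (F.filter (fun f => v ∈ f)).card := by
    intro v hv
    have hsum1 : ∑ f ∈ F.filter (fun f => v ∈ f), x f = 1 := (Finset.mem_filter.mp hv).2
    rw [show (2 : ℕ) = 1 + 1 from rfl, ← Nat.lt_iff_add_one_le, Finset.one_lt_card]
    have hne' : (F.filter (fun f => v ∈ f)).Nonempty := by
      rw [Finset.nonempty_iff_ne_empty]
      intro h; rw [h] at hsum1; simp at hsum1
    obtain ⟨p, hp⟩ := hne'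
    have hxp : x p < 1 := ((Finset.mem_filter.mp (Finset.mem_filter.mp hp).1).2).2
    have hrest : ∑ f ∈ (F.filter (fun f => v ∈ f)).erase p, x f = 1 - x p := by
      have h := Finset.add_sum_erase _ x hp
      linarith
    have hne2 : ((F.filter (fun f => v ∈ f)).erase p).Nonempty := by
      rw [Finset.nonempty_iff_ne_empty]
      intro h; rw [h] at hrest; simp at hrest; linarith
    obtain ⟨q, hq⟩ := hne2
    exact ⟨p, hp, q, Finset.mem_of_mem_erase hq,
      fun h => (Finset.ne_of_mem_erase hq) h.symm⟩
  have h1 : ∑ v ∈ T, (F.filter (fun f => v ∈ f)).card ≤ 2 * F.card := by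
    rw [← hhand]
    exact Finset.sum_le_sum_of_subset (Finset.subset_univ T)
  have hT2 : ∀ v ∈ T, (F.filter (fun f => v ∈ f)).card = 2 := by
    intro v hv
    by_contra hvne
    have h3 : 2 < (F.filter (fun f => v ∈ f)).card :=
      lt_of_le_of_ne (hdeg2 v hv) (Ne.symm hvne)
    have h4 : ∑ w ∈ T, 2 < ∑ w ∈ T, (F.filter (fun f => w ∈ f)).card :=
      Finset.sum_lt_sum hdeg2 ⟨v, hv, h3⟩
    rw [Finset.sum_const, smul_eq_mul] at h4
    omega
  -- the alternating kernel vector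
  have hane : x e ≠ 1 - x e := fun h => hne (by linarith)
  set d : Sym2 V → ℝ := fun f => if f ∈ F ∧ x f = x e then 1
    else if f ∈ F ∧ x f = 1 - x e then -1 else 0 with hd
  have hdF : ∀ f, f ∉ F → d f = 0 := by
    intro f hf; simp [hd, hf]
  have hdbal : ∀ v ∈ T, ∑ f ∈ F.filter (fun f => v ∈ f), d f = 0 := by
    intro v hv
    obtain ⟨p, q, hpq, hset⟩ := Finset.card_eq_two.mp (hT2 v hv)
    have hsum1 : x p + x q = 1 := by
      have h := (Finset.mem_filter.mp hv).2
      rw [hset, Finset.sum_pair hpq] at h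
      exact h
    have hpF : p ∈ F := by
      have h : p ∈ F.filter (fun f => v ∈ f) := hset ▸ Finset.mem_insert_self p {q}
      exact (Finset.mem_filter.mp h).1
    have hqF : q ∈ F := by
      have h : q ∈ F.filter (fun f => v ∈ f) := by
        rw [hset]; exact Finset.mem_insert_of_mem (Finset.mem_singleton_self q)
      exact (Finset.mem_filter.mp h).1
    rw [hset, Finset.sum_pair hpq]
    by_cases hp : x p = x e
    · have hq : x q = 1 - x e := by linarith
      have hq' : ¬ (x q = x e) := by rw [hq]; exact fun h => hane h.symm
      simp [hd, hpF, hqF, hp, hq, hq', Ne.symm hane]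
    · by_cases hp' : x p = 1 - x e
      · have hq : x q = x e := by linarith
        have hq' : ¬ (x q = 1 - x e) := by rw [hq]; exact hane
        simp [hd, hpF, hqF, hp, hp', hq, hq', Ne.symm hane]
      · have hq : ¬ (x q = x e) := fun h => hp' (by linarith)
        have hq' : ¬ (x q = 1 - x e) := fun h => hp (by linarith)
        simp [hd, hp, hp', hq, hq']
  have hd0 := HK d hdF hdbal
  have hde : d e = 1 := by simp [hd, heF]
  rw [hd0] at hde
  simpa using hde
end

section
/- If x is any point of the fractional matching polytope of a finite graph G (i.e., x ≥ 0 and Σ_{e ∈ δ(v)} x_e ≤ 1 for all v), then the scaled vector (2/3)x lies in the matching polytope, i.e., (2/3)x is a convex combination of indicator vectors of matchings of G. -/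
open Finset

/-- `M` is a matching of `G`: a set of edges of `G` that are pairwise non-adjacent. -/
def IsMatchingFinset {V : Type*} (G : SimpleGraph V) (M : Finset (Sym2 V)) : Prop :=
  (∀ e ∈ M, e ∈ G.edgeSet) ∧
  ∀ e₁ ∈ M, ∀ e₂ ∈ M, e₁ ≠ e₂ → ∀ v : V, ¬(v ∈ e₁ ∧ v ∈ e₂)

/-- The matching polytope: the convex hull of indicator vectors of matchings of `G`. -/
noncomputable def matchingPolytope {V : Type*} [DecidableEq V]
    (G : SimpleGraph V) : Set (Sym2 V → ℝ) :=
  convexHull ℝ {x | ∃ M : Finset (Sym2 V), IsMatchingFinset G M ∧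
    x = fun e => if e ∈ M then (1:ℝ) else 0}

section Aux

set_option linter.unusedSectionVars false

variable {V : Type*} [Fintype V] [DecidableEq V] (G : SimpleGraph V) [DecidableRel G.Adj]

lemma card2 (e : Sym2 V) (he : e ∈ G.edgeFinset) :
    (univ.filter (fun a => a ∈ e)).card = 2 := by
  induction e with
  | _ u v =>
    have hne : u ≠ v := by
      intro h
      exact (SimpleGraph.not_isDiag_of_mem_edgeSet G (SimpleGraph.mem_edgeFinset.mp he))
        (by simp [h])
    have : (univ.filter (fun a => a ∈ s(u, v))) = {u, v} := by
      ext a; simp [Sym2.mem_iff]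
    rw [this, card_insert_of_notMem (by simp [hne]), card_singleton]

lemma incSum {M : Type*} [AddCommMonoid M] (g : Sym2 V → M) (a : V) :
    ∑ b, (if G.Adj a b then g s(a, b) else 0)
      = ∑ e ∈ G.edgeFinset.filter (fun e => a ∈ e), g e := by
  rw [← Finset.sum_filter]
  have himg : (univ.filter (fun b => G.Adj a b)).image (fun b => s(a, b))
      = G.edgeFinset.filter (fun e => a ∈ e) := by
    ext e
    simp only [mem_image, mem_filter, mem_univ, true_and, SimpleGraph.mem_edgeFinset]
    constructor
    · rintro ⟨b, hb, rfl⟩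
      exact ⟨hb, Sym2.mem_mk_left a b⟩
    · rintro ⟨he, ha⟩
      obtain ⟨b, rfl⟩ := Sym2.mem_iff_exists.mp ha
      exact ⟨b, he, rfl⟩
  rw [← himg, Finset.sum_image]
  intro b₁ _ b₂ _ h
  exact Sym2.congr_right.mp h

lemma totSum (F : Sym2 V → ℝ) :
    ∑ a, ∑ b, (if G.Adj a b then F s(a, b) else 0) = 2 * ∑ e ∈ G.edgeFinset, F e := by
  have h1 : ∀ a, ∑ b, (if G.Adj a b then F s(a, b) else 0)
      = ∑ e ∈ G.edgeFinset, (if a ∈ e then F e else 0) := by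
    intro a; rw [incSum G F a, Finset.sum_filter]
  simp only [h1]
  rw [Finset.sum_comm]
  rw [Finset.mul_sum]
  refine Finset.sum_congr rfl ?_
  intro e he
  rw [← Finset.sum_filter, Finset.sum_const, card2 G e he]
  rw [nsmul_eq_mul]
  norm_num

lemma fibSum {α β : Type*} [DecidableEq β] (A : Finset α) (f : α → β) (g : β → ℝ) :
    ∑ a ∈ A, g (f a) = ∑ b ∈ A.image f, ((A.filter (fun a => f a = b)).card : ℝ) * g b := by
  rw [← Finset.sum_fiberwise_of_maps_to (fun a ha => Finset.mem_image_of_mem f ha) (fun a => g (f a))]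
  refine Finset.sum_congr rfl ?_
  intro b _
  have : ∀ a ∈ A.filter (fun a => f a = b), g (f a) = g b := by
    intro a ha; rw [(Finset.mem_filter.mp ha).2]
  rw [Finset.sum_congr rfl this, Finset.sum_const, nsmul_eq_mul]

lemma rows_eq {α : Type*} (s : Finset α) (f : α → ℕ) (c : ℕ) (h : ∀ i ∈ s, f i ≤ c)
    (ht : c * s.card ≤ ∑ i ∈ s, f i) : ∀ i ∈ s, f i = c := by
  by_contra hcon
  push_neg at hcon
  obtain ⟨i, hi, hne⟩ := hcon
  have hlt : ∑ j ∈ s, f j < ∑ _j ∈ s, c :=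
    Finset.sum_lt_sum h ⟨i, hi, lt_of_le_of_ne (h i hi) hne⟩
  rw [Finset.sum_const, smul_eq_mul, mul_comm] at hlt
  omega

lemma pad (K : ℕ) : ∀ (d : ℕ) (μ : V → V → ℕ), (∀ a, ∑ b, μ a b ≤ K) → (∀ b, ∑ a, μ a b ≤ K) →
    (K * Fintype.card V - ∑ a, ∑ b, μ a b ≤ d) →
    ∃ μ' : V → V → ℕ, (∀ a b, μ a b ≤ μ' a b) ∧ (∀ a, ∑ b, μ' a b = K) ∧
      (∀ b, ∑ a, μ' a b = K) := by
  intro d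
  induction d with
  | zero =>
    intro μ hr hc hd
    have htot : K * Fintype.card V ≤ ∑ a, ∑ b, μ a b := by omega
    have hrows : ∀ a : V, ∑ b, μ a b = K := by
      refine fun a => rows_eq univ (fun a => ∑ b, μ a b) K (fun i _ => hr i) ?_ a (mem_univ a)
      simpa [Finset.card_univ] using htot
    have hcols : ∀ b : V, ∑ a, μ a b = K := by
      refine fun b => rows_eq univ (fun b => ∑ a, μ a b) K (fun i _ => hc i) ?_ b (mem_univ b)
      rw [Finset.sum_comm] at htot
      simpa [Finset.card_univ] using htot
    exact ⟨μ, fun _ _ => le_rfl, hrows, hcols⟩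
  | succ d ih =>
    intro μ hr hc hd
    by_cases hall : ∀ a : V, ∑ b, μ a b = K
    · have htot : ∑ a, ∑ b, μ a b = K * Fintype.card V := by
        simp [hall, Finset.card_univ, mul_comm]
      have hcols : ∀ b : V, ∑ a, μ a b = K := by
        refine fun b => rows_eq univ (fun b => ∑ a, μ a b) K (fun i _ => hc i) ?_ b (mem_univ b)
        rw [Finset.sum_comm] at htot
        simp [Finset.card_univ]
        omega
      exact ⟨μ, fun _ _ => le_rfl, hall, hcols⟩
    · push_neg at hall
      obtain ⟨a₀, ha₀⟩ := hall
      have ha₀lt : ∑ b, μ a₀ b < K := lt_of_le_of_ne (hr a₀) ha₀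
      have htotlt : ∑ a, ∑ b, μ a b < K * Fintype.card V := by
        have : ∑ a, ∑ b, μ a b < ∑ _a : V, K :=
          Finset.sum_lt_sum (fun i _ => hr i) ⟨a₀, mem_univ a₀, ha₀lt⟩
        simpa [Finset.card_univ, mul_comm] using this
      have hcol : ∃ b₀ : V, ∑ a, μ a b₀ < K := by
        by_contra hcon
        push_neg at hcon
        have : ∀ b : V, ∑ a, μ a b = K := fun b => le_antisymm (hc b) (hcon b)
        have : ∑ a, ∑ b, μ a b = K * Fintype.card V := by
          rw [Finset.sum_comm]; simp [this, Finset.card_univ, mul_comm]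
        omega
      obtain ⟨b₀, hb₀⟩ := hcol
      set ν : V → V → ℕ := fun a b => μ a b + if a = a₀ ∧ b = b₀ then 1 else 0 with hν
      have hνrow : ∀ a, ∑ b, ν a b = ∑ b, μ a b + if a = a₀ then 1 else 0 := by
        intro a
        rw [Finset.sum_add_distrib]
        congr 1
        by_cases h : a = a₀ <;> simp [h]
      have hνcol : ∀ b, ∑ a, ν a b = ∑ a, μ a b + if b = b₀ then 1 else 0 := by
        intro b
        rw [Finset.sum_add_distrib]
        congr 1
        by_cases h : b = b₀ <;> simp [h]
      have h1 : ∀ a, ∑ b, ν a b ≤ K := by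
        intro a; rw [hνrow]
        by_cases h : a = a₀ <;> simp [h]
        · omega
        · exact hr a
      have h2 : ∀ b, ∑ a, ν a b ≤ K := by
        intro b; rw [hνcol]
        by_cases h : b = b₀ <;> simp [h]
        · omega
        · exact hc b
      have h3 : K * Fintype.card V - ∑ a, ∑ b, ν a b ≤ d := by
        have : ∑ a, ∑ b, ν a b = (∑ a, ∑ b, μ a b) + 1 := by
          simp only [hνrow]
          rw [Finset.sum_add_distrib]
          simp
        omega
      obtain ⟨μ', hle, hrow', hcol'⟩ := ih ν h1 h2 h3
      exact ⟨μ', fun a b => le_trans (Nat.le_add_right _ _) (hle a b), hrow', hcol'⟩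

lemma hallPerm (K : ℕ) (hK : 0 < K) (μ : V → V → ℕ)
    (hr : ∀ a, ∑ b, μ a b = K) (hc : ∀ b, ∑ a, μ a b = K) :
    ∃ σ : Equiv.Perm V, ∀ a, 0 < μ a (σ a) := by
  have hall : ∀ s : Finset V, s.card ≤ (s.biUnion (fun a => univ.filter (fun b => 0 < μ a b))).card := by
    intro s
    set B := s.biUnion (fun a => univ.filter (fun b => 0 < μ a b)) with hB
    have key : K * s.card ≤ K * B.card := by
      calc K * s.card = ∑ a ∈ s, K := by rw [Finset.sum_const, smul_eq_mul, mul_comm]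
        _ = ∑ a ∈ s, ∑ b, μ a b := by simp [hr]
        _ = ∑ a ∈ s, ∑ b ∈ B, μ a b := by
            refine Finset.sum_congr rfl fun a ha => ?_
            refine (Finset.sum_subset (Finset.subset_univ B) ?_).symm
            intro b _ hb
            by_contra hpos
            exact hb (Finset.mem_biUnion.mpr ⟨a, ha, Finset.mem_filter.mpr
              ⟨mem_univ b, Nat.pos_of_ne_zero hpos⟩⟩)
        _ = ∑ b ∈ B, ∑ a ∈ s, μ a b := Finset.sum_comm
        _ ≤ ∑ b ∈ B, ∑ a, μ a b :=
            Finset.sum_le_sum fun b _ => Finset.sum_le_sum_of_subset (Finset.subset_univ s)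
        _ = ∑ b ∈ B, K := by simp [hc]
        _ = K * B.card := by rw [Finset.sum_const, smul_eq_mul, mul_comm]
    exact Nat.le_of_mul_le_mul_left key hK
  obtain ⟨f, hinj, hf⟩ := (Finset.all_card_le_biUnion_card_iff_exists_injective _).mp hall
  refine ⟨Equiv.ofBijective f ((Finite.injective_iff_bijective).mp hinj), fun a => ?_⟩
  have := hf a
  simpa using (Finset.mem_filter.mp this).2

lemma decomp (w' : V → V → ℝ) (hw' : ∀ a b, 0 ≤ w' a b) :
    ∀ (K : ℕ) (μ : V → V → ℕ), (∀ a, ∑ b, μ a b = K) → (∀ b, ∑ a, μ a b = K) →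
    ∃ σ : Equiv.Perm V, ∑ a, ∑ b, (μ a b : ℝ) * w' a b ≤ K * ∑ a, w' a (σ a) := by
  intro K
  induction K with
  | zero =>
    intro μ hr _
    refine ⟨1, le_of_eq ?_⟩
    have : ∀ a b, μ a b = 0 := by
      intro a b
      have := hr a
      have := Finset.sum_eq_zero_iff.mp (hr a) b (mem_univ b)
      exact this
    simp [this]
  | succ K ih =>
    intro μ hr hc
    obtain ⟨σ₁, hσ₁⟩ := hallPerm (K + 1) (Nat.succ_pos K) μ hr hc
    set μ₂ : V → V → ℕ := fun a b => μ a b - (if b = σ₁ a then 1 else 0) with hμ₂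
    have hpt : ∀ a b, (if b = σ₁ a then 1 else 0) ≤ μ a b := by
      intro a b
      by_cases h : b = σ₁ a <;> simp [h]
      subst h; exact hσ₁ a
    have hr₂ : ∀ a, ∑ b, μ₂ a b = K := by
      intro a
      rw [hμ₂]
      simp only
      rw [Finset.sum_tsub_distrib univ (fun b _ => hpt a b), hr a]
      simp
    have hc₂ : ∀ b, ∑ a, μ₂ a b = K := by
      intro b
      rw [hμ₂]
      simp only
      rw [Finset.sum_tsub_distrib univ (fun a _ => hpt a b), hc b]
      have : ∑ a, (if b = σ₁ a then 1 else 0) = ∑ a, (if a = σ₁.symm b then 1 else 0) := by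
        refine Finset.sum_congr rfl fun a _ => ?_
        congr 1
        simp only [eq_iff_iff]
        constructor
        · intro h; rw [h]; simp
        · intro h; rw [h]; simp
      rw [this]
      simp
    obtain ⟨σ₂, hσ₂⟩ := ih μ₂ hr₂ hc₂
    have hsplit : ∑ a, ∑ b, (μ a b : ℝ) * w' a b
        = (∑ a, ∑ b, (μ₂ a b : ℝ) * w' a b) + ∑ a, w' a (σ₁ a) := by
      rw [← Finset.sum_add_distrib]
      refine Finset.sum_congr rfl fun a _ => ?_
      have : ∑ b, (μ a b : ℝ) * w' a b
          = ∑ b, ((μ₂ a b : ℝ) * w' a b + (if b = σ₁ a then w' a b else 0)) := by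
        refine Finset.sum_congr rfl fun b _ => ?_
        have hcast : (μ a b : ℝ) = (μ₂ a b : ℝ) + (if b = σ₁ a then 1 else 0) := by
          rw [hμ₂]
          simp only
          rw [Nat.cast_sub (hpt a b)]
          by_cases h : b = σ₁ a <;> simp [h]
        rw [hcast]
        by_cases h : b = σ₁ a <;> simp [h] <;> ring
      rw [this, Finset.sum_add_distrib]
      congr 1
      simp
    set S₁ := ∑ a, w' a (σ₁ a) with hS₁
    set S₂ := ∑ a, w' a (σ₂ a) with hS₂
    rcases le_total S₁ S₂ with h | h
    · refine ⟨σ₂, ?_⟩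
      rw [hsplit]
      push_cast
      calc (∑ a, ∑ b, (μ₂ a b : ℝ) * w' a b) + S₁ ≤ K * S₂ + S₂ := add_le_add hσ₂ h
        _ = (K + 1) * S₂ := by ring
    · refine ⟨σ₁, ?_⟩
      rw [hsplit]
      push_cast
      have hKS : (K : ℝ) * S₂ ≤ K * S₁ := by
        apply mul_le_mul_of_nonneg_left h (by positivity)
      calc (∑ a, ∑ b, (μ₂ a b : ℝ) * w' a b) + S₁ ≤ K * S₁ + S₁ :=
            add_le_add (le_trans hσ₂ hKS) le_rfl
        _ = (K + 1) * S₁ := by ring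

lemma sym2_exists_mem (e : Sym2 V) : ∃ v, v ∈ e := by
  induction e with
  | _ u v => exact ⟨u, Sym2.mem_mk_left u v⟩

lemma greedy (wt : Sym2 V → ℝ) (hwt : ∀ e, 0 ≤ wt e) (c : Sym2 V → ℕ) :
    ∀ (n : ℕ) (H : Finset (Sym2 V)), H.card ≤ n →
    (∀ e ∈ H, c e ≤ 2) →
    (∀ v : V, (H.filter (fun e => v ∈ e)).card ≤ 2) →
    (∀ e ∈ H, c e = 2 → ∀ f ∈ H, (∃ v : V, v ∈ e ∧ v ∈ f) → f = e) →
    ∃ M, M ⊆ H ∧ (∀ e₁ ∈ M, ∀ e₂ ∈ M, e₁ ≠ e₂ → ∀ v : V, ¬(v ∈ e₁ ∧ v ∈ e₂)) ∧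
      ∑ e ∈ H, (c e : ℝ) * wt e ≤ 3 * ∑ e ∈ M, wt e := by
  classical
  intro n
  induction n with
  | zero =>
    intro H hcard _ _ _
    have : H = ∅ := Finset.card_eq_zero.mp (Nat.le_zero.mp hcard)
    subst this
    exact ⟨∅, Finset.Subset.refl _, by simp, by simp⟩
  | succ n ih =>
    intro H hcard hc2 hdeg hiso
    rcases Finset.eq_empty_or_nonempty H with rfl | hne
    · exact ⟨∅, Finset.Subset.refl _, by simp, by simp⟩
    obtain ⟨estar, hestar, hmax⟩ := Finset.exists_max_image H wt hne
    set p : Sym2 V → Prop := fun f => ∃ v, v ∈ f ∧ v ∈ estar with hp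
    set D := H.filter (fun f => p f) with hD
    set H' := H.filter (fun f => ¬ p f) with hH'
    have hestarD : estar ∈ D := by
      obtain ⟨v, hv⟩ := sym2_exists_mem estar
      exact Finset.mem_filter.mpr ⟨hestar, ⟨v, hv, hv⟩⟩
    have hH'sub : H' ⊆ H := Finset.filter_subset _ _
    have hH'card : H'.card ≤ n := by
      have h1 : H' ⊆ H.erase estar := by
        intro f hf
        rw [Finset.mem_erase]
        refine ⟨?_, hH'sub hf⟩
        intro h
        subst h
        exact (Finset.mem_filter.mp hf).2 (Finset.mem_filter.mp hestarD).2
      have := Finset.card_le_card h1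
      rw [Finset.card_erase_of_mem hestar] at this
      omega
    obtain ⟨M, hMsub, hMmatch, hMsum⟩ := ih H' hH'card
      (fun e he => hc2 e (hH'sub he))
      (fun v => le_trans (Finset.card_le_card
        (Finset.filter_subset_filter _ hH'sub)) (hdeg v))
      (fun e he h2 f hf hsh => hiso e (hH'sub he) h2 f (hH'sub hf) hsh)
    have hestarM : estar ∉ M := by
      intro h
      exact (Finset.mem_filter.mp (hMsub h)).2 (Finset.mem_filter.mp hestarD).2
    refine ⟨insert estar M, ?_, ?_, ?_⟩
    · intro e he
      rcases Finset.mem_insert.mp he with rfl | he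
      · exact hestar
      · exact hH'sub (hMsub he)
    · intro e₁ he₁ e₂ he₂ hne12 v hv
      have hH'p : ∀ f ∈ M, ¬ p f := fun f hf => (Finset.mem_filter.mp (hMsub hf)).2
      rcases Finset.mem_insert.mp he₁ with h₁ | h₁
      · rcases Finset.mem_insert.mp he₂ with h₂ | h₂
        · exact hne12 (h₁.trans h₂.symm)
        · exact hH'p e₂ h₂ ⟨v, hv.2, h₁ ▸ hv.1⟩
      · rcases Finset.mem_insert.mp he₂ with h₂ | h₂
        · exact hH'p e₁ h₁ ⟨v, hv.1, h₂ ▸ hv.2⟩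
        · exact hMmatch e₁ h₁ e₂ h₂ hne12 v hv
    · -- sum bound
      have hsplit : ∑ e ∈ H, (c e : ℝ) * wt e
          = (∑ e ∈ D, (c e : ℝ) * wt e) + ∑ e ∈ H', (c e : ℝ) * wt e := by
        rw [hD, hH', Finset.sum_filter_add_sum_filter_not]
      have hkey : ∑ e ∈ D, (c e : ℝ) * wt e ≤ 3 * wt estar := by
        by_cases h2 : c estar = 2
        · have hDsingle : D = {estar} := by
            apply Finset.eq_singleton_iff_unique_mem.mpr
            refine ⟨hestarD, fun f hf => ?_⟩
            obtain ⟨hfH, v, hvf, hve⟩ := Finset.mem_filter.mp hf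
            exact hiso estar hestar h2 f hfH ⟨v, hve, hvf⟩
          rw [hDsingle, Finset.sum_singleton, h2]
          have := hwt estar
          push_cast
          linarith
        · have hc1 : (c estar : ℝ) ≤ 1 := by
            have := hc2 estar hestar
            have : c estar ≤ 1 := by omega
            exact_mod_cast this
          obtain ⟨u, v, rfl⟩ : ∃ u v, estar = s(u, v) := by
            induction estar with
            | _ u v => exact ⟨u, v, rfl⟩
          set e0 : Sym2 V := s(u, v)
          have hD' : D.erase e0 ⊆
              ((H.filter (fun f => u ∈ f)).erase e0) ∪ ((H.filter (fun f => v ∈ f)).erase e0) := by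
            intro f hf
            obtain ⟨hfne, hfD⟩ := Finset.mem_erase.mp hf
            obtain ⟨hfH, x, hxf, hxe⟩ := Finset.mem_filter.mp hfD
            rcases Sym2.mem_iff.mp hxe with rfl | rfl
            · exact Finset.mem_union_left _ (Finset.mem_erase.mpr
                ⟨hfne, Finset.mem_filter.mpr ⟨hfH, hxf⟩⟩)
            · exact Finset.mem_union_right _ (Finset.mem_erase.mpr
                ⟨hfne, Finset.mem_filter.mpr ⟨hfH, hxf⟩⟩)
          have hcard2 : (D.erase e0).card ≤ 2 := by
            have h1 : ((H.filter (fun f => u ∈ f)).erase e0).card ≤ 1 := by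
              have he0 : e0 ∈ H.filter (fun f => u ∈ f) :=
                Finset.mem_filter.mpr ⟨hestar, Sym2.mem_mk_left u v⟩
              have := Finset.card_erase_of_mem he0
              have := hdeg u
              omega
            have h2' : ((H.filter (fun f => v ∈ f)).erase e0).card ≤ 1 := by
              have he0 : e0 ∈ H.filter (fun f => v ∈ f) :=
                Finset.mem_filter.mpr ⟨hestar, Sym2.mem_mk_right u v⟩
              have := Finset.card_erase_of_mem he0
              have := hdeg v
              omega
            calc (D.erase e0).card ≤ _ := Finset.card_le_card hD'
              _ ≤ _ := Finset.card_union_le _ _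
              _ ≤ 2 := by omega
          have hterm : ∀ f ∈ D.erase e0, (c f : ℝ) * wt f ≤ wt e0 := by
            intro f hf
            obtain ⟨hfne, hfD⟩ := Finset.mem_erase.mp hf
            obtain ⟨hfH, x, hxf, hxe⟩ := Finset.mem_filter.mp hfD
            have hcf : c f ≤ 1 := by
              by_contra hcon
              have : c f = 2 := by have := hc2 f hfH; omega
              have := hiso f hfH this e0 hestar ⟨x, hxf, hxe⟩
              exact hfne this.symm
            have h1 : (c f : ℝ) * wt f ≤ wt f := by
              have : (c f : ℝ) ≤ 1 := by exact_mod_cast hcf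
              nlinarith [hwt f]
            exact le_trans h1 (hmax f hfH)
          have hsum2 : ∑ f ∈ D.erase e0, (c f : ℝ) * wt f ≤ 2 * wt e0 := by
            calc ∑ f ∈ D.erase e0, (c f : ℝ) * wt f ≤ ∑ _f ∈ D.erase e0, wt e0 :=
                  Finset.sum_le_sum hterm
              _ = (D.erase e0).card * wt e0 := by rw [Finset.sum_const, nsmul_eq_mul]
              _ ≤ 2 * wt e0 := by
                  have := hwt e0
                  have : ((D.erase e0).card : ℝ) ≤ 2 := by exact_mod_cast hcard2
                  nlinarith [hwt e0]
          have : ∑ f ∈ D, (c f : ℝ) * wt f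
              = (c e0 : ℝ) * wt e0 + ∑ f ∈ D.erase e0, (c f : ℝ) * wt f :=
            (Finset.add_sum_erase _ _ hestarD).symm
          rw [this]
          have := hwt e0
          nlinarith
      have hsumM : ∑ e ∈ insert estar M, wt e = wt estar + ∑ e ∈ M, wt e :=
        Finset.sum_insert hestarM
      rw [hsplit, hsumM]
      linarith

lemma step (w : Sym2 V → ℝ) (hw : ∀ e, 0 ≤ w e) (y : Sym2 V → ℝ) (hy0 : ∀ e, 0 ≤ y e)
    (hload : ∀ v : V, ∑ e ∈ G.edgeFinset.filter (fun e => v ∈ e), y e ≤ 2/3) (n : ℕ) :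
    ∃ M : Finset (Sym2 V), IsMatchingFinset G M ∧
      (∑ e ∈ G.edgeFinset, w e * y e) - (∑ e ∈ G.edgeFinset, w e) / (3 * (n + 1 : ℝ))
        ≤ ∑ e ∈ M, w e := by
  classical
  set N : ℕ := 3 * (n + 1) with hNdef
  set K : ℕ := 2 * (n + 1) with hKdef
  have hNpos : (0:ℝ) < (N : ℝ) := by positivity
  set m : Sym2 V → ℕ := fun e => ⌊(N : ℝ) * y e⌋₊ with hmdef
  have hm_le : ∀ e, (m e : ℝ) ≤ (N : ℝ) * y e :=
    fun e => Nat.floor_le (mul_nonneg (by positivity) (hy0 e))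
  have hm_ge : ∀ e, (N : ℝ) * y e - 1 ≤ (m e : ℝ) :=
    fun e => le_of_lt (Nat.sub_one_lt_floor _)
  set μ : V → V → ℕ := fun a b => if G.Adj a b then m s(a, b) else 0 with hμdef
  have hμsymm : ∀ a b, μ a b = μ b a := by
    intro a b
    by_cases h : G.Adj a b
    · rw [hμdef]; simp only [if_pos h, if_pos h.symm, Sym2.eq_swap]
    · rw [hμdef]; simp only [if_neg h, if_neg (fun h' : G.Adj b a => h h'.symm)]
  have hrow : ∀ a, ∑ b, μ a b ≤ K := by
    intro a
    rw [hμdef]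
    simp only
    rw [incSum G m a]
    have hcast : ((∑ e ∈ G.edgeFinset.filter (fun e => a ∈ e), m e : ℕ) : ℝ) ≤ (K : ℝ) := by
      push_cast
      calc ∑ e ∈ G.edgeFinset.filter (fun e => a ∈ e), (m e : ℝ)
          ≤ ∑ e ∈ G.edgeFinset.filter (fun e => a ∈ e), (N : ℝ) * y e :=
            Finset.sum_le_sum fun e _ => hm_le e
        _ = (N : ℝ) * ∑ e ∈ G.edgeFinset.filter (fun e => a ∈ e), y e := by
            rw [Finset.mul_sum]
        _ ≤ (N : ℝ) * (2/3) := by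
            apply mul_le_mul_of_nonneg_left (hload a) (by positivity)
        _ = (K : ℝ) := by rw [hNdef, hKdef]; push_cast; ring
    exact_mod_cast hcast
  have hcol : ∀ b, ∑ a, μ a b ≤ K := by
    intro b
    have : ∑ a, μ a b = ∑ a, μ b a := Finset.sum_congr rfl fun a _ => hμsymm a b
    rw [this]
    exact hrow b
  obtain ⟨μ', hμle, hrow', hcol'⟩ := pad K (K * Fintype.card V - ∑ a, ∑ b, μ a b) μ
    hrow hcol le_rfl
  set w' : V → V → ℝ := fun a b => if G.Adj a b then w s(a, b) else 0 with hw'def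
  have hw'0 : ∀ a b, 0 ≤ w' a b := by
    intro a b
    by_cases h : G.Adj a b <;> simp [hw'def, h, hw _]
  obtain ⟨σ, hσ⟩ := decomp w' hw'0 K μ' hrow' hcol'
  have hmono : ∑ a, ∑ b, (μ a b : ℝ) * w' a b ≤ ∑ a, ∑ b, (μ' a b : ℝ) * w' a b :=
    Finset.sum_le_sum fun a _ => Finset.sum_le_sum fun b _ =>
      mul_le_mul_of_nonneg_right (Nat.cast_le.mpr (hμle a b)) (hw'0 a b)
  have hident : ∑ a, ∑ b, (μ a b : ℝ) * w' a b
      = 2 * ∑ e ∈ G.edgeFinset, (m e : ℝ) * w e := by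
    rw [← totSum G (fun e => (m e : ℝ) * w e)]
    refine Finset.sum_congr rfl fun a _ => Finset.sum_congr rfl fun b _ => ?_
    rw [hμdef, hw'def]
    by_cases h : G.Adj a b <;> simp [h]
  -- build H and c
  set A : Finset V := univ.filter (fun a => G.Adj a (σ a)) with hAdef
  set fσ : V → Sym2 V := fun a => s(a, σ a) with hfσdef
  set H : Finset (Sym2 V) := A.image fσ with hHdef
  set c : Sym2 V → ℕ := fun e => (A.filter (fun a => fσ a = e)).card with hcdef
  have hSsum : ∑ a, w' a (σ a) = ∑ e ∈ H, (c e : ℝ) * w e := by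
    have h1 : ∑ a, w' a (σ a) = ∑ a ∈ A, w (fσ a) := by
      rw [hAdef, Finset.sum_filter]
    rw [h1, fibSum A fσ w, hHdef, hcdef]
  have hHE : H ⊆ G.edgeFinset := by
    intro e he
    obtain ⟨a, ha, rfl⟩ := Finset.mem_image.mp he
    have hadj : G.Adj a (σ a) := (Finset.mem_filter.mp ha).2
    rw [hfσdef, SimpleGraph.mem_edgeFinset]
    exact hadj
  have hfib_sub : ∀ e, A.filter (fun a => fσ a = e) ⊆ univ.filter (fun a => a ∈ e) := by
    intro e a ha
    obtain ⟨_, hfa⟩ := Finset.mem_filter.mp ha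
    refine Finset.mem_filter.mpr ⟨mem_univ a, ?_⟩
    rw [← hfa, hfσdef]
    exact Sym2.mem_mk_left a (σ a)
  have hc2 : ∀ e ∈ H, c e ≤ 2 := by
    intro e he
    rw [hcdef]
    calc (A.filter (fun a => fσ a = e)).card ≤ (univ.filter (fun a => a ∈ e)).card :=
        Finset.card_le_card (hfib_sub e)
      _ = 2 := card2 G e (hHE he)
  have hdeg : ∀ v : V, (H.filter (fun e => v ∈ e)).card ≤ 2 := by
    intro v
    have hsub : H.filter (fun e => v ∈ e) ⊆ {s(v, σ v), s(σ.symm v, v)} := by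
      intro e he
      obtain ⟨heH, hv⟩ := Finset.mem_filter.mp he
      obtain ⟨a, _, rfl⟩ := Finset.mem_image.mp heH
      rw [hfσdef] at hv ⊢
      rcases Sym2.mem_iff.mp hv with h | h
      · subst h
        exact Finset.mem_insert_self _ _
      · have ha : a = σ.symm v := by rw [h]; simp
        refine Finset.mem_insert.mpr (Or.inr (Finset.mem_singleton.mpr ?_))
        show s(a, σ a) = s(σ.symm v, v)
        rw [ha, Equiv.apply_symm_apply]
    calc (H.filter (fun e => v ∈ e)).card ≤ _ := Finset.card_le_card hsub
      _ ≤ 2 := Finset.card_insert_le _ _ |>.trans (by simp)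
  have hiso : ∀ e ∈ H, c e = 2 → ∀ f ∈ H, (∃ v : V, v ∈ e ∧ v ∈ f) → f = e := by
    intro e heH h2 f hfH hshare
    obtain ⟨v, hve, hvf⟩ := hshare
    have hfull : A.filter (fun a => fσ a = e) = univ.filter (fun a => a ∈ e) := by
      apply Finset.eq_of_subset_of_card_le (hfib_sub e)
      rw [card2 G e (hHE heH)]
      exact h2.symm.le
    have hkey : ∀ x, x ∈ e → s(x, σ x) = e := by
      intro x hx
      have hmem : x ∈ A.filter (fun a => fσ a = e) := by
        rw [hfull]
        exact Finset.mem_filter.mpr ⟨mem_univ x, hx⟩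
      have := (Finset.mem_filter.mp hmem).2
      rw [hfσdef] at this
      exact this
    obtain ⟨a, _, rfl⟩ := Finset.mem_image.mp hfH
    rw [hfσdef] at hvf ⊢
    rcases Sym2.mem_iff.mp hvf with h | h
    · subst h
      exact hkey v hve
    · have h1 : s(v, σ v) = e := hkey v hve
      have hσv_mem : σ v ∈ e := by rw [← h1]; exact Sym2.mem_mk_right v (σ v)
      have h2' : s(σ v, σ (σ v)) = e := hkey (σ v) hσv_mem
      have hσσ : σ (σ v) = v := by
        rw [← h1] at h2'
        rcases Sym2.eq_iff.mp h2' with ⟨hx, hy⟩ | ⟨hx, hy⟩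
        · rw [hy, hx]
        · exact hy
      have ha : a = σ v := by
        apply σ.injective
        rw [← h, hσσ]
      subst ha
      show s(σ v, σ (σ v)) = e
      rw [hσσ, Sym2.eq_swap]
      exact hkey v hve
  obtain ⟨M, hMH, hMmatch, hMg⟩ := greedy w hw c H.card H le_rfl hc2 hdeg hiso
  -- numeric chain
  have main1 : 2 * ∑ e ∈ G.edgeFinset, (m e : ℝ) * w e ≤ (K : ℝ) * (3 * ∑ e ∈ M, w e) := by
    calc 2 * ∑ e ∈ G.edgeFinset, (m e : ℝ) * w e
        = ∑ a, ∑ b, (μ a b : ℝ) * w' a b := hident.symm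
      _ ≤ ∑ a, ∑ b, (μ' a b : ℝ) * w' a b := hmono
      _ ≤ (K : ℝ) * ∑ a, w' a (σ a) := hσ
      _ = (K : ℝ) * ∑ e ∈ H, (c e : ℝ) * w e := by rw [hSsum]
      _ ≤ (K : ℝ) * (3 * ∑ e ∈ M, w e) :=
          mul_le_mul_of_nonneg_left hMg (by positivity)
  have hK3 : (K : ℝ) * 3 = 2 * (N : ℝ) := by rw [hNdef, hKdef]; push_cast; ring
  have main2 : ∑ e ∈ G.edgeFinset, (m e : ℝ) * w e ≤ (N : ℝ) * ∑ e ∈ M, w e := by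
    have heq : (K : ℝ) * (3 * ∑ e ∈ M, w e) = 2 * ((N : ℝ) * ∑ e ∈ M, w e) := by
      rw [← mul_assoc, hK3]; ring
    linarith [main1]
  have lower : (N : ℝ) * (∑ e ∈ G.edgeFinset, w e * y e) - ∑ e ∈ G.edgeFinset, w e
      ≤ ∑ e ∈ G.edgeFinset, (m e : ℝ) * w e := by
    have h1 : ∑ e ∈ G.edgeFinset, (((N : ℝ) * y e - 1) * w e)
        ≤ ∑ e ∈ G.edgeFinset, (m e : ℝ) * w e :=
      Finset.sum_le_sum fun e _ => mul_le_mul_of_nonneg_right (hm_ge e) (hw e)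
    have h2 : ∑ e ∈ G.edgeFinset, (((N : ℝ) * y e - 1) * w e)
        = (N : ℝ) * (∑ e ∈ G.edgeFinset, w e * y e) - ∑ e ∈ G.edgeFinset, w e := by
      rw [Finset.mul_sum, ← Finset.sum_sub_distrib]
      exact Finset.sum_congr rfl fun e _ => by ring
    rw [← h2]
    exact h1
  refine ⟨M, ⟨fun e he => SimpleGraph.mem_edgeFinset.mp (hHE (hMH he)), hMmatch⟩, ?_⟩
  have hNX : (N : ℝ) = 3 * (n + 1 : ℝ) := by rw [hNdef]; push_cast; ring
  set X := ∑ e ∈ G.edgeFinset, w e * y e with hX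
  set W := ∑ e ∈ G.edgeFinset, w e with hW
  set S := ∑ e ∈ M, w e with hS
  have h3 : (X - W / (N : ℝ)) * N ≤ S * N := by
    have hexp : (X - W / (N : ℝ)) * N = N * X - W := by field_simp
    rw [hexp]
    calc (N : ℝ) * X - W ≤ ∑ e ∈ G.edgeFinset, (m e : ℝ) * w e := lower
      _ ≤ (N : ℝ) * S := main2
      _ = S * N := by ring
  have hfin := le_of_mul_le_mul_right h3 hNpos
  rwa [hNX] at hfin

lemma comb (w : Sym2 V → ℝ) (hw : ∀ e, 0 ≤ w e) (y : Sym2 V → ℝ) (hy0 : ∀ e, 0 ≤ y e)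
    (hload : ∀ v : V, ∑ e ∈ G.edgeFinset.filter (fun e => v ∈ e), y e ≤ 2/3) :
    ∃ M : Finset (Sym2 V), IsMatchingFinset G M ∧
      ∑ e ∈ G.edgeFinset, w e * y e ≤ ∑ e ∈ M, w e := by
  classical
  set 𝕄 : Finset (Finset (Sym2 V)) := univ.filter (fun M => IsMatchingFinset G M) with h𝕄
  have hne : 𝕄.Nonempty := by
    refine ⟨∅, Finset.mem_filter.mpr ⟨mem_univ _, ?_, ?_⟩⟩
    · intro e he; exact absurd he (Finset.notMem_empty e)
    · intro e₁ he₁; exact absurd he₁ (Finset.notMem_empty e₁)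
  set ν : ℝ := 𝕄.sup' hne (fun M => ∑ e ∈ M, w e) with hν
  set X : ℝ := ∑ e ∈ G.edgeFinset, w e * y e with hX
  set W : ℝ := ∑ e ∈ G.edgeFinset, w e with hW
  have hν_ge : ∀ n : ℕ, X - W / (3 * (n + 1 : ℝ)) ≤ ν := by
    intro n
    obtain ⟨M, hM, hle⟩ := step G w hw y hy0 hload n
    refine le_trans hle ?_
    exact Finset.le_sup' (fun M => ∑ e ∈ M, w e) (Finset.mem_filter.mpr ⟨mem_univ M, hM⟩)
  have hWnn : 0 ≤ W := Finset.sum_nonneg fun e _ => hw e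
  have hfinal : X ≤ ν := by
    by_contra hcon
    push_neg at hcon
    set ε : ℝ := X - ν with hε
    have hεpos : 0 < ε := by simp [hε]; linarith
    obtain ⟨n, hn⟩ := exists_nat_gt (W / (3 * ε))
    have h3 : W < (n : ℝ) * (3 * ε) := by
      rwa [div_lt_iff₀ (by positivity)] at hn
    have h4 : ε ≤ W / (3 * ((n : ℝ) + 1)) := by
      have := hν_ge n
      rw [hε]
      linarith
    have h5 : ε * (3 * ((n : ℝ) + 1)) ≤ W := by
      rwa [le_div_iff₀ (by positivity)] at h4
    nlinarith [hεpos]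
  obtain ⟨Mstar, hmem, hsup⟩ := Finset.exists_mem_eq_sup' hne (fun M => ∑ e ∈ M, w e)
  exact ⟨Mstar, (Finset.mem_filter.mp hmem).2, hfinal.trans (le_of_eq hsup)⟩


end Aux

theorem stmt5 {V : Type*} [Fintype V] [DecidableEq V]
    (G : SimpleGraph V) [DecidableRel G.Adj]
    (x : Sym2 V → ℝ) (hx : x ∈ fracMatchingPolytope G) :
    (fun e => (2/3 : ℝ) * x e) ∈ matchingPolytope G := by
  classical
  by_contra hcon
  set S : Set (Sym2 V → ℝ) := {z | ∃ M : Finset (Sym2 V), IsMatchingFinset G M ∧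
    z = fun e => if e ∈ M then (1:ℝ) else 0} with hS
  have hpoly : matchingPolytope G = convexHull ℝ S := rfl
  have hSfin : S.Finite := by
    apply Set.Finite.subset (Set.finite_range
      (fun M : Finset (Sym2 V) => fun e => if e ∈ M then (1:ℝ) else 0))
    rintro z ⟨M, _, rfl⟩
    exact ⟨M, rfl⟩
  have hclosed : IsClosed (matchingPolytope G) := by
    rw [hpoly]
    exact (hSfin.isCompact_convexHull (𝕜 := ℝ)).isClosed
  have hconv : Convex ℝ (matchingPolytope G) := by
    rw [hpoly]
    exact convex_convexHull ℝ S
  obtain ⟨f, u, hfs, hfx⟩ := geometric_hahn_banach_closed_point hconv hclosed hcon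
  set w₀ : Sym2 V → ℝ := fun e => f (fun j => if e = j then 1 else 0) with hw₀
  have hfrep : ∀ z : Sym2 V → ℝ, f z = ∑ e, z e * w₀ e := by
    intro z
    conv_lhs => rw [pi_eq_sum_univ z]
    rw [map_sum]
    exact Finset.sum_congr rfl fun e _ => by rw [map_smul, smul_eq_mul]
  set wp : Sym2 V → ℝ := fun e => if e ∈ G.edgeFinset then max (w₀ e) 0 else 0 with hwpdef
  have hwp : ∀ e, 0 ≤ wp e := by
    intro e
    rw [hwpdef]
    dsimp only
    split
    · exact le_max_right _ _
    · exact le_rfl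
  set y : Sym2 V → ℝ := fun e => 2/3 * x e with hy
  have hy0 : ∀ e, 0 ≤ y e := fun e => mul_nonneg (by norm_num) (hx.1 e)
  have hload : ∀ v : V, ∑ e ∈ G.edgeFinset.filter (fun e => v ∈ e), y e ≤ 2/3 := by
    intro v
    have h1 : ∑ e ∈ G.edgeFinset.filter (fun e => v ∈ e), y e
        = 2/3 * ∑ e ∈ G.edgeFinset.filter (fun e => v ∈ e), x e := by
      rw [Finset.mul_sum]
    rw [h1]
    have := hx.2.2 v
    nlinarith
  obtain ⟨M, hM, hsum⟩ := comb G wp hwp y hy0 hload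
  set M' : Finset (Sym2 V) := M.filter (fun e => 0 < w₀ e) with hM'def
  have hM'match : IsMatchingFinset G M' :=
    ⟨fun e he => hM.1 e (Finset.filter_subset _ _ he),
     fun e₁ h₁ e₂ h₂ => hM.2 e₁ (Finset.filter_subset _ _ h₁) e₂ (Finset.filter_subset _ _ h₂)⟩
  have hz'mem : (fun e => if e ∈ M' then (1:ℝ) else 0) ∈ matchingPolytope G := by
    rw [hpoly]
    exact subset_convexHull ℝ S ⟨M', hM'match, rfl⟩
  have hlt := hfs _ hz'mem
  have hz' : f (fun e => if e ∈ M' then (1:ℝ) else 0) = ∑ e ∈ M', w₀ e := by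
    rw [hfrep]
    have hpt : ∀ e, ((if e ∈ M' then (1:ℝ) else 0) * w₀ e) = (if e ∈ M' then w₀ e else 0) := by
      intro e; split <;> simp
    rw [Finset.sum_congr rfl (fun e _ => hpt e), Finset.sum_ite_mem, Finset.univ_inter]
  have hME : ∀ e ∈ M, e ∈ G.edgeFinset := fun e he => SimpleGraph.mem_edgeFinset.mpr (hM.1 e he)
  have hMwp : ∑ e ∈ M', w₀ e = ∑ e ∈ M, wp e := by
    rw [← Finset.sum_filter_add_sum_filter_not M (fun e => 0 < w₀ e) wp]
    have h1 : ∑ e ∈ M', wp e = ∑ e ∈ M', w₀ e := by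
      refine Finset.sum_congr rfl fun e he => ?_
      obtain ⟨heM, hpos⟩ := Finset.mem_filter.mp he
      rw [hwpdef]
      dsimp only
      rw [if_pos (hME e heM), max_eq_left (le_of_lt hpos)]
    have h2 : ∑ e ∈ M.filter (fun e => ¬ 0 < w₀ e), wp e = 0 := by
      refine Finset.sum_eq_zero fun e he => ?_
      obtain ⟨heM, hneg⟩ := Finset.mem_filter.mp he
      rw [hwpdef]
      dsimp only
      rw [if_pos (hME e heM), max_eq_right (le_of_not_gt hneg)]
    rw [h1, h2, add_zero]
  have hyE : ∀ e ∉ G.edgeFinset, y e = 0 := by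
    intro e he
    rw [hy]
    dsimp only
    rw [hx.2.1 e he, mul_zero]
  have hfy : f y ≤ ∑ e ∈ G.edgeFinset, wp e * y e := by
    rw [hfrep]
    have h1 : ∑ e, y e * w₀ e = ∑ e ∈ G.edgeFinset, y e * w₀ e := by
      refine (Finset.sum_subset (Finset.subset_univ _) ?_).symm
      intro e _ he
      rw [hyE e he, zero_mul]
    rw [h1]
    refine Finset.sum_le_sum fun e he => ?_
    have hle : w₀ e ≤ wp e := by
      rw [hwpdef]
      dsimp only
      rw [if_pos he]
      exact le_max_left _ _
    calc y e * w₀ e ≤ y e * wp e := mul_le_mul_of_nonneg_left hle (hy0 e)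
      _ = wp e * y e := mul_comm _ _
  have : u < u :=
    lt_of_lt_of_le hfx (hfy.trans (hsum.trans (le_of_eq (hMwp.symm.trans hz'.symm)))) |>.trans_le
      (le_of_lt hlt)
  exact lt_irrefl u this
end
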